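/- Let A, B ∈ M_{4×2}(ℂ) be such that the span of the columns of A together with the columns of B is 2-dimensional, neither A : ℂ² → ℂ⁴ nor B : ℂ² → ℂ⁴ is injective, and for every (z₀, z₁) ∈ ℂ² with z₀ ≠ 0 and z₁ ≠ 0 the map z₀A + z₁B : ℂ² → ℂ⁴ is injective. Then there exist G ∈ GL(4, ℂ) and g ∈ GL(2, ℂ) such that G·A·g = A₀ and G·B·g = B₀, where A₀ has rows (0,1), (0,0), (0,0), (0,0) and B₀ has rows (0,0), (1,0), (0,0), (0,0). -/

import Mathlib

open Matrix

-- auxiliary: invertible G with prescribed images of two independent vectors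
lemma exists_gl_of_indep (a b : Fin 4 → ℂ) (h : LinearIndependent ℂ ![a, b]) :
    ∃ G : Matrix.GeneralLinearGroup (Fin 4) ℂ,
      (G : Matrix (Fin 4) (Fin 4) ℂ).mulVec a = Pi.single 0 1 ∧
      (G : Matrix (Fin 4) (Fin 4) ℂ).mulVec b = Pi.single 1 1 := by
  have hab : a ≠ b := by
    intro e
    have := h.injective (show ![a,b] 0 = ![a,b] 1 by simp [e])
    exact absurd this (by decide)
  have hrange : Set.range ![a, b] = {a, b} := by
    ext x; simp [Fin.exists_fin_two]; tauto
  have hs : LinearIndepOn ℂ id ({a, b} : Set (Fin 4 → ℂ)) := by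
    have := (linearIndepOn_id_range_iff h.injective).mpr h
    rwa [hrange] at this
  set t := hs.extend (Set.subset_univ _) with ht
  let bas : Module.Basis t ℂ (Fin 4 → ℂ) := Module.Basis.extend hs
  have ha' : a ∈ t := hs.subset_extend _ (by simp)
  have hb' : b ∈ t := hs.subset_extend _ (by simp)
  haveI : Fintype t := FiniteDimensional.fintypeBasisIndex bas
  have hcard : Fintype.card t = 4 := by
    have := Module.finrank_eq_card_basis bas
    simpa using this.symm
  let e0 : t ≃ Fin 4 := Fintype.equivFinOfCardEq hcard
  let xa : t := ⟨a, ha'⟩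
  let xb : t := ⟨b, hb'⟩
  have hxab : xa ≠ xb := fun e => hab (congrArg Subtype.val e)
  let e1 : t ≃ Fin 4 := e0.trans (Equiv.swap (e0 xa) 0)
  let e2 : t ≃ Fin 4 := e1.trans (Equiv.swap (e1 xb) 1)
  have he1a : e1 xa = 0 := by simp [e1]
  have he2a : e2 xa = 0 := by
    have h1 : e1 xb ≠ 0 := by
      rw [← he1a]; exact fun e => hxab (e1.injective e).symm
    show (Equiv.swap (e1 xb) 1) (e1 xa) = 0
    rw [he1a, Equiv.swap_apply_of_ne_of_ne (Ne.symm h1) (by decide)]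
  have he2b : e2 xb = 1 := by simp [e2]
  let Cb : Module.Basis (Fin 4) ℂ (Fin 4 → ℂ) := bas.reindex e2
  have hCb0 : Cb 0 = a := by
    rw [Module.Basis.reindex_apply, ← he2a, Equiv.symm_apply_apply]
    exact Module.Basis.extend_apply_self hs xa
  have hCb1 : Cb 1 = b := by
    rw [Module.Basis.reindex_apply, ← he2b, Equiv.symm_apply_apply]
    exact Module.Basis.extend_apply_self hs xb
  let G : Matrix (Fin 4) (Fin 4) ℂ := LinearMap.toMatrix' Cb.equivFun.toLinearMap
  let G' : Matrix (Fin 4) (Fin 4) ℂ := LinearMap.toMatrix' Cb.equivFun.symm.toLinearMap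
  have hGG' : G * G' = 1 := by
    rw [← LinearMap.toMatrix'_comp]
    simp
  have hG'G : G' * G = 1 := by
    rw [← LinearMap.toMatrix'_comp]
    simp
  refine ⟨⟨G, G', hGG', hG'G⟩, ?_, ?_⟩
  · have : G.mulVec a = Cb.equivFun a := by
      rw [← Matrix.toLin'_apply, Matrix.toLin'_toMatrix']; rfl
    rw [this, ← hCb0]
    funext j
    rw [Module.Basis.equivFun_self]
    simp [Pi.single_apply, eq_comm]
  · have : G.mulVec b = Cb.equivFun b := by
      rw [← Matrix.toLin'_apply, Matrix.toLin'_toMatrix']; rfl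
    rw [this, ← hCb1]
    funext j
    rw [Module.Basis.equivFun_self]
    simp [Pi.single_apply, eq_comm]

/-- normal form (4.38), Case (iv) of Theorem 4.30. If the columns of
`A` and `B` together span a 2-dimensional subspace of `ℂ⁴`, neither `A` nor `B` is
injective, but every member `z₀A + z₁B` of the pencil with `z₀ ≠ 0` and `z₁ ≠ 0` is
injective, then `(A, B)` can be brought to the standard form by the
`GL(4,ℂ) × GL(2,ℂ)`-action. -/
theorem pencil_normal_form_case_iv
    (A B : Matrix (Fin 4) (Fin 2) ℂ)
    (hrank : Module.finrank ℂ
      (Submodule.span ℂ (Set.range Aᵀ ∪ Set.range Bᵀ)) = 2)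
    (hA : ¬ Function.Injective A.mulVec)
    (hB : ¬ Function.Injective B.mulVec)
    (hinj : ∀ z₀ z₁ : ℂ, z₀ ≠ 0 → z₁ ≠ 0 →
      Function.Injective ((z₀ • A + z₁ • B).mulVec)) :
    ∃ (G : Matrix.GeneralLinearGroup (Fin 4) ℂ) (g : Matrix.GeneralLinearGroup (Fin 2) ℂ),
      (G : Matrix (Fin 4) (Fin 4) ℂ) * A * (g : Matrix (Fin 2) (Fin 2) ℂ) =
        !![0, 1; 0, 0; 0, 0; 0, 0] ∧
      (G : Matrix (Fin 4) (Fin 4) ℂ) * B * (g : Matrix (Fin 2) (Fin 2) ℂ) =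
        !![0, 0; 1, 0; 0, 0; 0, 0] := by
  -- kernel vectors
  rw [Function.not_injective_iff] at hA hB
  obtain ⟨x, y, hxy, hxyne⟩ := hA
  obtain ⟨x', y', hxy', hxyne'⟩ := hB
  set v : Fin 2 → ℂ := x - y with hv
  set w : Fin 2 → ℂ := x' - y' with hw
  have hv0 : v ≠ 0 := sub_ne_zero.mpr hxyne
  have hw0 : w ≠ 0 := sub_ne_zero.mpr hxyne'
  have hAv : A.mulVec v = 0 := by
    rw [hv, Matrix.mulVec_sub, hxy, sub_self]
  have hBw : B.mulVec w = 0 := by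
    rw [hw, Matrix.mulVec_sub, hxy', sub_self]
  have hABinj : Function.Injective (A + B).mulVec := by
    have := hinj 1 1 one_ne_zero one_ne_zero
    simpa using this
  have hAw : A.mulVec w ≠ 0 := by
    intro h
    apply hw0
    apply hABinj
    simp [Matrix.add_mulVec, h, hBw, Matrix.mulVec_zero]
  have hBv : B.mulVec v ≠ 0 := by
    intro h
    apply hv0
    apply hABinj
    simp [Matrix.add_mulVec, h, hAv, Matrix.mulVec_zero]
  set a : Fin 4 → ℂ := A.mulVec w with ha
  set b : Fin 4 → ℂ := B.mulVec v with hb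
  set d : ℂ := v 0 * w 1 - v 1 * w 0 with hd
  -- the determinant is nonzero
  have hdne : d ≠ 0 := by
    intro hd0
    apply hAw
    have : ∃ c : ℂ, w = c • v := by
      by_cases hv00 : v 0 = 0
      · have hv1 : v 1 ≠ 0 := by
          intro h1
          apply hv0
          funext i; fin_cases i <;> simp [hv00, h1]
        have hw00 : w 0 = 0 := by
          have hz : v 1 * w 0 = 0 := by
            rw [hd, hv00] at hd0; linear_combination -hd0
          exact (mul_eq_zero.mp hz).resolve_left hv1
        refine ⟨w 1 / v 1, ?_⟩
        funext i; fin_cases i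
        · simp [hw00, hv00]
        · show w 1 = w 1 / v 1 * v 1
          field_simp
      · refine ⟨w 0 / v 0, ?_⟩
        funext i; fin_cases i
        · show w 0 = w 0 / v 0 * v 0
          field_simp
        · show w 1 = w 0 / v 0 * v 1
          rw [div_mul_eq_mul_div, eq_div_iff hv00]
          rw [hd] at hd0
          linear_combination hd0
    obtain ⟨c, hc⟩ := this
    rw [ha, hc, Matrix.mulVec_smul, hAv, smul_zero]
  -- decomposition of arbitrary vectors
  have hdecomp : ∀ u : Fin 2 → ℂ,
      u = ((u 0 * w 1 - u 1 * w 0) / d) • v + ((v 0 * u 1 - v 1 * u 0) / d) • w := by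
    intro u
    funext i; fin_cases i <;>
      · simp only [Pi.add_apply, Pi.smul_apply, smul_eq_mul]
        field_simp
        simp only [Fin.zero_eta, Fin.mk_one, hd]
        ring
  have hAu : ∀ u : Fin 2 → ℂ, A.mulVec u = ((v 0 * u 1 - v 1 * u 0) / d) • a := by
    intro u
    conv_lhs => rw [hdecomp u]
    rw [Matrix.mulVec_add, Matrix.mulVec_smul, Matrix.mulVec_smul, hAv, smul_zero, zero_add, ha]
  have hBu : ∀ u : Fin 2 → ℂ, B.mulVec u = ((u 0 * w 1 - u 1 * w 0) / d) • b := by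
    intro u
    conv_lhs => rw [hdecomp u]
    rw [Matrix.mulVec_add, Matrix.mulVec_smul, Matrix.mulVec_smul, hBw, smul_zero, add_zero, hb]
  -- span equality
  have hspan : Submodule.span ℂ (Set.range Aᵀ ∪ Set.range Bᵀ)
      = Submodule.span ℂ ({a, b} : Set (Fin 4 → ℂ)) := by
    apply le_antisymm
    · rw [Submodule.span_le]
      rintro z (⟨j, rfl⟩ | ⟨j, rfl⟩)
      · rw [show Aᵀ j = A *ᵥ Pi.single j 1 from (Matrix.mulVec_single_one A j).symm, hAu]
        exact Submodule.smul_mem _ _ (Submodule.subset_span (by simp))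
      · rw [show Bᵀ j = B *ᵥ Pi.single j 1 from (Matrix.mulVec_single_one B j).symm, hBu]
        exact Submodule.smul_mem _ _ (Submodule.subset_span (by simp))
    · rw [Submodule.span_le]
      rintro z hz
      rcases hz with rfl | rfl
      · have : a = w 0 • Aᵀ 0 + w 1 • Aᵀ 1 := by
          funext i
          simp [ha, Matrix.mulVec, dotProduct, Fin.sum_univ_two, Matrix.transpose_apply,
            mul_comm]
        rw [this]
        exact add_mem
          (Submodule.smul_mem _ _ (Submodule.subset_span (Or.inl ⟨0, rfl⟩)))
          (Submodule.smul_mem _ _ (Submodule.subset_span (Or.inl ⟨1, rfl⟩)))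
      · have : b = v 0 • Bᵀ 0 + v 1 • Bᵀ 1 := by
          funext i
          simp [hb, Matrix.mulVec, dotProduct, Fin.sum_univ_two, Matrix.transpose_apply,
            mul_comm]
        rw [this]
        exact add_mem
          (Submodule.smul_mem _ _ (Submodule.subset_span (Or.inr ⟨0, rfl⟩)))
          (Submodule.smul_mem _ _ (Submodule.subset_span (Or.inr ⟨1, rfl⟩)))
  have hind : LinearIndependent ℂ ![a, b] := by
    rw [linearIndependent_iff_card_eq_finrank_span]
    have hr : Set.range ![a, b] = {a, b} := by
      ext z; simp [Fin.exists_fin_two]; tauto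
    rw [hr]
    show (2 : ℕ) = _
    rw [Set.finrank, ← hspan, hrank]
  obtain ⟨G, hGa, hGb⟩ := exists_gl_of_indep a b hind
  set gmat : Matrix (Fin 2) (Fin 2) ℂ := !![v 0, w 0; v 1, w 1] with hgmat
  have hdet : gmat.det ≠ 0 := by
    rw [hgmat, Matrix.det_fin_two_of]
    intro h
    apply hdne
    rw [hd]; linear_combination h
  refine ⟨G, Matrix.GeneralLinearGroup.mkOfDetNeZero gmat hdet, ?_, ?_⟩
  · have hcoe : ((Matrix.GeneralLinearGroup.mkOfDetNeZero gmat hdet :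
        Matrix.GeneralLinearGroup (Fin 2) ℂ) : Matrix (Fin 2) (Fin 2) ℂ) = gmat := rfl
    rw [hcoe, Matrix.mul_assoc]
    have hAg : A * gmat = Matrix.of (fun i j => if j = 1 then a i else 0) := by
      ext i j
      rw [Matrix.mul_apply, Fin.sum_univ_two]
      fin_cases j
      · have h := congrFun hAv i
        simp [Matrix.mulVec, dotProduct, Fin.sum_univ_two] at h
        simpa [hgmat] using h
      · simp [hgmat, ha, Matrix.mulVec, dotProduct, Fin.sum_univ_two]
    rw [hAg]
    ext i j
    rw [Matrix.mul_apply]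
    fin_cases j
    · simp only [Matrix.of_apply]
      fin_cases i <;> simp [Matrix.vecHead, Matrix.vecTail]
    · have h := congrFun hGa i
      simp only [Matrix.mulVec, dotProduct] at h
      simp only [Matrix.of_apply]
      norm_num
      rw [h]
      fin_cases i <;> simp [Matrix.vecHead, Matrix.vecTail, Pi.single_apply]
  · have hcoe : ((Matrix.GeneralLinearGroup.mkOfDetNeZero gmat hdet :
        Matrix.GeneralLinearGroup (Fin 2) ℂ) : Matrix (Fin 2) (Fin 2) ℂ) = gmat := rfl
    rw [hcoe, Matrix.mul_assoc]
    have hBg : B * gmat = Matrix.of (fun i j => if j = 0 then b i else 0) := by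
      ext i j
      rw [Matrix.mul_apply, Fin.sum_univ_two]
      fin_cases j
      · simp [hgmat, hb, Matrix.mulVec, dotProduct, Fin.sum_univ_two]
      · have h := congrFun hBw i
        simp [Matrix.mulVec, dotProduct, Fin.sum_univ_two] at h
        simpa [hgmat] using h
    rw [hBg]
    ext i j
    rw [Matrix.mul_apply]
    fin_cases j
    · have h := congrFun hGb i
      simp only [Matrix.mulVec, dotProduct] at h
      simp only [Matrix.of_apply]
      norm_num
      rw [h]
      fin_cases i <;> simp [Matrix.vecHead, Matrix.vecTail, Pi.single_apply]
    · simp only [Matrix.of_apply]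
      fin_cases i <;> simp [Matrix.vecHead, Matrix.vecTail]
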